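/- Let π be a possibility distribution on ℝⁿ satisfying Assumption 1, let ℓ be a positive integer, ε ∈ [0,1), b ∈ ℝ, x ∈ ℝⁿ, and let g : ℝ → ℝ be a nondecreasing convex function. Then sup_{P ∈ P_π^ℓ} CVaR_P^ε[g(ãᵀx)] ≤ b, where g(ãᵀx) denotes the random variable a ↦ g(aᵀx) under P, holds if and only if there exist w, t ∈ ℝ and reals v_i ≥ 0 (i ∈ Λ) such that: (i) w + Σ_{i∈Λ}(λ_i − 1)v_i ≤ (b − t)(1 − ε); (ii) w − Σ_{j≤i} v_j ≥ 0 for every i ∈ Λ; (iii) w − Σ_{j≤i} v_j + t ≥ g(aᵀx) for every i ∈ Λ and every a ∈ C(λ_i). -/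

import Mathlib

open MeasureTheory Set
open scoped ENNReal

/-- Conditional Value at Risk at level `ε` of the random variable `X` under `P`:
`CVaR_P^ε[X] = inf_t ( t + (1/(1-ε)) · E_P[max(X - t, 0)] )`. -/
noncomputable def cvar {Ω : Type*} [MeasurableSpace Ω] (P : Measure Ω) (ε : ℝ) (X : Ω → ℝ) : ℝ :=
  ⨅ t : ℝ, (t + (1 / (1 - ε)) * ∫ a, max (X a - t) 0 ∂P)

/-- The discrete ambiguity set `P_π^ℓ`: Borel probability measures `P` with
`P(C(λ_i)) ≥ 1 - λ_i` for all `i ∈ Λ = {0,…,ℓ}`, where `λ_i = i/ℓ`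
(the case `i = 0` states that `P` is supported on `C(0)`). -/
def ambiguitySet (n ℓ : ℕ) (C : ℝ → Set (Fin n → ℝ)) : Set (Measure (Fin n → ℝ)) :=
  {P | IsProbabilityMeasure P ∧
    ∀ i : Fin (ℓ + 1), ENNReal.ofReal (1 - ((i : ℕ) : ℝ) / ℓ) ≤ P (C (((i : ℕ) : ℝ) / ℓ))}

lemma sum_Iic_fin (m : ℕ) (i : Fin (m+1)) (F : ℕ → ℝ) :
    ∑ j ∈ Finset.Iic i, F (j : ℕ) = ∑ k ∈ Finset.range (i.val + 1), F k := by
  have h1 : Finset.Iic i = Finset.univ.filter (fun j : Fin (m+1) => (j:ℕ) ≤ (i:ℕ)) := by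
    ext j
    simp only [Finset.mem_Iic, Finset.mem_filter, Finset.mem_univ, true_and, Fin.le_def]
  rw [h1, Finset.sum_filter,
    Fin.sum_univ_eq_sum_range (fun k => if k ≤ (i:ℕ) then F k else 0) (m+1),
    ← Finset.sum_filter]
  congr 1
  ext k
  simp only [Finset.mem_filter, Finset.mem_range]
  omega

lemma telescope_aux (u : ℕ → ℝ) (m : ℕ) :
    ∑ k ∈ Finset.range (m+1), (if k = 0 then 0 else u (k-1) - u k) = u 0 - u m := by
  induction m with
  | zero => simp
  | succ m ih => rw [Finset.sum_range_succ, ih]; simp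

lemma parts_aux (c s : ℕ → ℝ) (m : ℕ) :
    ∑ k ∈ Finset.range m, c (k+1) * (s k - s (k+1))
      = ∑ k ∈ Finset.range m, (c (k+1) - c k) * s k + c 0 * s 0 - c m * s m := by
  induction m with
  | zero => simp
  | succ m ih => rw [Finset.sum_range_succ, Finset.sum_range_succ, ih]; ring

lemma abel_aux (ℓ : ℕ) (hℓ : 1 ≤ ℓ) (s : ℕ → ℝ) :
    s 0 + ∑ i ∈ Finset.range (ℓ+1), ((i:ℝ)/ℓ - 1) * (if i = 0 then 0 else s (i-1) - s i)
      = (ℓ:ℝ)⁻¹ * ∑ k ∈ Finset.range ℓ, s k := by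
  have hl : (ℓ:ℝ) ≠ 0 := Nat.cast_ne_zero.2 (by omega)
  set c : ℕ → ℝ := fun k => (k:ℝ) - ℓ with hc
  have key : ∑ i ∈ Finset.range (ℓ+1), ((i:ℝ) - ℓ) * (if i = 0 then 0 else s (i-1) - s i)
      = ∑ k ∈ Finset.range ℓ, s k - ℓ * s 0 := by
    rw [Finset.sum_range_succ' (fun i => ((i:ℝ) - ℓ) * (if i = 0 then 0 else s (i-1) - s i)) ℓ]
    have e0 : ∀ k ∈ Finset.range ℓ, ((((k+1:ℕ)):ℝ) - ℓ) * (if (k+1) = 0 then 0 else s ((k+1)-1) - s (k+1))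
        = c (k+1) * (s k - s (k+1)) := by
      intro k _
      simp only [Nat.succ_ne_zero, if_false, Nat.add_sub_cancel, hc]
    rw [Finset.sum_congr rfl e0, parts_aux c s ℓ]
    have e1 : ∀ k ∈ Finset.range ℓ, (c (k+1) - c k) * s k = s k := by
      intro k _; simp only [hc]; push_cast; ring
    rw [Finset.sum_congr rfl e1]
    simp only [hc]
    push_cast
    ring
  have expand : ∀ i ∈ Finset.range (ℓ+1), ((i:ℝ)/ℓ - 1) * (if i = 0 then 0 else s (i-1) - s i)
      = (ℓ:ℝ)⁻¹ * (((i:ℝ) - ℓ) * (if i = 0 then 0 else s (i-1) - s i)) := by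
    intro i _
    rw [div_sub_one hl, div_eq_inv_mul, mul_assoc]
  rw [Finset.sum_congr rfl expand, ← Finset.mul_sum, key]
  field_simp
  ring

/-- Theorem (reformulation of the distributionally robust CVaR constraint):
`sup_{P ∈ P_π^ℓ} CVaR_P^ε[g(ãᵀx)] ≤ b` iff the system (i)–(iii) is feasible. -/
theorem cvar_constraint_iff (n ℓ : ℕ) (hn : 1 ≤ n) (hℓ : 1 ≤ ℓ)
    (π : (Fin n → ℝ) → ℝ) (hrange : ∀ a, π a ∈ Icc (0 : ℝ) 1)
    (C : ℝ → Set (Fin n → ℝ))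
    (hcut : ∀ lam : ℝ, 0 < lam → C lam = {a | lam ≤ π a})
    (hsupp : C 0 = closure {a | 0 < π a})
    (ahat : Fin n → ℝ) (hnorm : π ahat = 1)
    (hcont : ContinuousOn π (C 0))
    (hcompact : IsCompact (C 0))
    (hclosed : ∀ lam ∈ Icc (0 : ℝ) 1, IsClosed (C lam))
    (hconvex : ∀ lam ∈ Icc (0 : ℝ) 1, Convex ℝ (C lam))
    (hint : ∀ lam ∈ Ico (0 : ℝ) 1, (interior (C lam)).Nonempty)
    (ε : ℝ) (hε : ε ∈ Ico (0 : ℝ) 1) (b : ℝ) (x : Fin n → ℝ)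
    (g : ℝ → ℝ) (hg : Monotone g) (hgconv : ConvexOn ℝ univ g) :
    (∀ P ∈ ambiguitySet n ℓ C, cvar P ε (fun a => g (∑ j, a j * x j)) ≤ b)
    ↔ ∃ (w t : ℝ) (v : Fin (ℓ + 1) → ℝ),
        (∀ i, 0 ≤ v i) ∧
        w + ∑ i : Fin (ℓ + 1), (((i : ℕ) : ℝ) / ℓ - 1) * v i ≤ (b - t) * (1 - ε) ∧
        (∀ i : Fin (ℓ + 1), 0 ≤ w - ∑ j ∈ Finset.Iic i, v j) ∧
        (∀ i : Fin (ℓ + 1), ∀ a ∈ C (((i : ℕ) : ℝ) / ℓ),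
          g (∑ j, a j * x j) ≤ w - ∑ j ∈ Finset.Iic i, v j + t) := by
  classical
  set X : (Fin n → ℝ) → ℝ := fun a => g (∑ j, a j * x j) with hXdef
  set L : (Fin n → ℝ) → ℝ := fun a => ∑ j, a j * x j with hLdef
  have hLcont : Continuous L :=
    continuous_finset_sum _ (fun j _ => (continuous_apply j).mul continuous_const)
  have hXL : ∀ a, X a = g (L a) := fun a => rfl
  have hXmeas : Measurable X := hg.measurable.comp hLcont.measurable
  have hε1 : (0:ℝ) < 1 - ε := by have := hε.2; simp only [mem_Ico] at hε; linarith [hε.2]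
  have hcpos : (0:ℝ) < 1/(1-ε) := by positivity
  have hcge1 : (1:ℝ) ≤ 1/(1-ε) := by
    rw [le_div_iff₀ hε1]; have := hε.1; linarith
  have hlR : (0:ℝ) < (ℓ:ℝ) := by exact_mod_cast Nat.pos_of_ne_zero (by omega)
  have hlam_mem : ∀ i : Fin (ℓ+1), ((i:ℕ):ℝ)/ℓ ∈ Icc (0:ℝ) 1 := by
    intro i
    constructor
    · positivity
    · rw [div_le_one hlR]
      exact_mod_cast Nat.lt_succ_iff.1 i.isLt
  have hmono' : ∀ (lam mu : ℝ), 0 ≤ lam → lam ≤ mu → mu ≤ 1 → C mu ⊆ C lam := by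
    intro lam mu h0 hlm hm1
    rcases eq_or_lt_of_le h0 with h|h
    · rcases eq_or_lt_of_le (h.le.trans hlm) with h2|h2
      · rw [← h, ← h2]
      · rw [hcut mu h2, ← h, hsupp]
        intro a ha
        exact subset_closure (lt_of_lt_of_le h2 ha)
    · rw [hcut lam h, hcut mu (lt_of_lt_of_le h hlm)]
      intro a ha
      exact le_trans hlm ha
  have hCsubIJ : ∀ i j : Fin (ℓ+1), i ≤ j → C (((j:ℕ):ℝ)/ℓ) ⊆ C (((i:ℕ):ℝ)/ℓ) := by
    intro i j hij
    refine hmono' _ _ (hlam_mem i).1 ?_ (hlam_mem j).2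
    gcongr
    exact_mod_cast hij
  have hC0sub : ∀ i : Fin (ℓ+1), C (((i:ℕ):ℝ)/ℓ) ⊆ C 0 := by
    intro i
    exact hmono' 0 _ le_rfl (hlam_mem i).1 (hlam_mem i).2
  have hzero : (((0: Fin (ℓ+1)):ℕ):ℝ)/(ℓ:ℝ) = 0 := by simp
  have hclosed' : ∀ i : Fin (ℓ+1), IsClosed (C (((i:ℕ):ℝ)/ℓ)) := fun i => hclosed _ (hlam_mem i)
  have hCmeas : ∀ i : Fin (ℓ+1), MeasurableSet (C (((i:ℕ):ℝ)/ℓ)) :=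
    fun i => (hclosed' i).measurableSet
  have hC0closed : IsClosed (C 0) := hclosed 0 ⟨le_rfl, zero_le_one⟩
  have hCcompact : ∀ i : Fin (ℓ+1), IsCompact (C (((i:ℕ):ℝ)/ℓ)) :=
    fun i => hcompact.of_isClosed_subset (hclosed' i) (hC0sub i)
  have hahat : ∀ i : Fin (ℓ+1), ahat ∈ C (((i:ℕ):ℝ)/ℓ) := by
    intro i
    rcases eq_or_lt_of_le (hlam_mem i).1 with h|h
    · rw [← h, hsupp]
      refine subset_closure ?_
      simp only [mem_setOf_eq, hnorm]
      norm_num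
    · rw [hcut _ h]
      simp only [mem_setOf_eq, hnorm]
      exact (hlam_mem i).2
  obtain ⟨R, hR⟩ := hcompact.exists_bound_of_continuousOn hLcont.continuousOn
  set K : ℝ := max ‖g R‖ ‖g (-R)‖ with hKdef
  have hXbound : ∀ a ∈ C 0, ‖X a‖ ≤ K := by
    intro a ha
    have h1 : |L a| ≤ R := hR a ha
    rw [abs_le] at h1
    have h2 : g (L a) ≤ g R := hg h1.2
    have h3 : g (-R) ≤ g (L a) := hg h1.1
    rw [hXL, Real.norm_eq_abs, abs_le]
    constructor
    · calc -K ≤ -‖g (-R)‖ := by simp [hKdef]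
        _ ≤ g (-R) := neg_abs_le _
        _ ≤ g (L a) := h3
    · calc g (L a) ≤ g R := h2
        _ ≤ ‖g R‖ := le_abs_self _
        _ ≤ K := le_max_left _ _
  constructor
  · -- hard direction
    intro H
    have hCne : ∀ i : Fin (ℓ+1), (C (((i:ℕ):ℝ)/ℓ)).Nonempty := fun i => ⟨ahat, hahat i⟩
    have hmaxex : ∀ i : Fin (ℓ+1), ∃ a, a ∈ C (((i:ℕ):ℝ)/ℓ) ∧
        ∀ a' ∈ C (((i:ℕ):ℝ)/ℓ), L a' ≤ L a := by
      intro i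
      obtain ⟨a, ha, hm⟩ := (hCcompact i).exists_isMaxOn (hCne i) hLcont.continuousOn
      exact ⟨a, ha, fun a' ha' => hm ha'⟩
    choose aa haaMem haaMax using hmaxex
    set aN : ℕ → (Fin n → ℝ) := fun k => aa ⟨min k ℓ, by omega⟩ with haNdef
    set MN : ℕ → ℝ := fun k => g (L (aN k)) with hMNdef
    have haNmem' : ∀ (i : Fin (ℓ+1)) (k : ℕ), (i:ℕ) ≤ k → aN k ∈ C (((i:ℕ):ℝ)/ℓ) := by
      intro i k hik
      refine hCsubIJ i ⟨min k ℓ, by omega⟩ ?_ (haaMem _)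
      rw [Fin.le_def]
      simp only []
      have := i.isLt
      omega
    have hMNanti : ∀ k k', k ≤ k' → MN k' ≤ MN k := by
      intro k k' hkk
      apply hg
      refine haaMax ⟨min k ℓ, by omega⟩ _ ?_
      refine hCsubIJ ⟨min k ℓ, by omega⟩ ⟨min k' ℓ, by omega⟩ ?_ (haaMem _)
      rw [Fin.le_def]
      simp only []
      omega
    have hlE0 : ((ℓ:ℝ≥0∞)) ≠ 0 := by
      exact_mod_cast (Nat.cast_ne_zero (R := ℝ≥0∞)).2 (by omega)
    have hlET : ((ℓ:ℝ≥0∞)) ≠ ⊤ := ENNReal.natCast_ne_top ℓ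
    set Pstar : Measure (Fin n → ℝ) :=
      ((ℓ:ℝ≥0∞))⁻¹ • ∑ k ∈ Finset.range ℓ, Measure.dirac (aN k) with hPsdef
    have hPsApply : ∀ s : Set (Fin n → ℝ), MeasurableSet s →
        Pstar s = ((ℓ:ℝ≥0∞))⁻¹ * ∑ k ∈ Finset.range ℓ, s.indicator 1 (aN k) := by
      intro s hs
      rw [hPsdef, Measure.smul_apply, Measure.finset_sum_apply, smul_eq_mul]
      congr 1
      exact Finset.sum_congr rfl fun k _ => Measure.dirac_apply' _ hs
    have hPsprob : IsProbabilityMeasure Pstar := by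
      constructor
      rw [hPsApply univ MeasurableSet.univ]
      simp only [Set.indicator_univ, Pi.one_apply, Finset.sum_const, Finset.card_range,
        nsmul_eq_mul, mul_one]
      exact ENNReal.inv_mul_cancel hlE0 hlET
    have hPscut : ∀ i : Fin (ℓ+1),
        ENNReal.ofReal (1 - ((i:ℕ):ℝ)/ℓ) ≤ Pstar (C (((i:ℕ):ℝ)/ℓ)) := by
      intro i
      rw [hPsApply _ (hCmeas i)]
      have hsub : Finset.Ico (i:ℕ) ℓ ⊆ Finset.range ℓ := by
        intro k hk
        simp only [Finset.mem_Ico] at hk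
        simp only [Finset.mem_range]
        omega
      have hge : ∑ k ∈ Finset.Ico (i:ℕ) ℓ, (C (((i:ℕ):ℝ)/ℓ)).indicator (1 : (Fin n → ℝ) → ℝ≥0∞) (aN k)
          ≤ ∑ k ∈ Finset.range ℓ, (C (((i:ℕ):ℝ)/ℓ)).indicator (1 : (Fin n → ℝ) → ℝ≥0∞) (aN k) :=
        Finset.sum_le_sum_of_subset hsub
      have hone : ∀ k ∈ Finset.Ico (i:ℕ) ℓ,
          (C (((i:ℕ):ℝ)/ℓ)).indicator (1 : (Fin n → ℝ) → ℝ≥0∞) (aN k) = 1 := by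
        intro k hk
        simp only [Finset.mem_Ico] at hk
        rw [Set.indicator_of_mem (haNmem' i k hk.1)]
        rfl
      have hcard : ∑ k ∈ Finset.Ico (i:ℕ) ℓ, (C (((i:ℕ):ℝ)/ℓ)).indicator (1 : (Fin n → ℝ) → ℝ≥0∞) (aN k)
          = ((ℓ - (i:ℕ) : ℕ) : ℝ≥0∞) := by
        rw [Finset.sum_congr rfl hone]
        simp [Nat.card_Ico]
      have hiℓ : (i:ℕ) ≤ ℓ := Nat.lt_succ_iff.1 i.isLt
      have heq : ENNReal.ofReal (1 - ((i:ℕ):ℝ)/ℓ) = ((ℓ:ℝ≥0∞))⁻¹ * ((ℓ - (i:ℕ):ℕ):ℝ≥0∞) := by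
        have h1 : (1 : ℝ) - ((i:ℕ):ℝ)/ℓ = (((ℓ - (i:ℕ):ℕ)):ℝ)/(ℓ:ℝ) := by
          rw [Nat.cast_sub hiℓ]
          field_simp
        rw [h1, ENNReal.ofReal_div_of_pos hlR, ENNReal.ofReal_natCast, ENNReal.ofReal_natCast,
          ENNReal.div_eq_inv_mul]
      rw [heq, ← hcard]
      exact mul_le_mul_right hge _
    have hdint : ∀ (τ : ℝ) (k : ℕ),
        Integrable (fun a => max (X a - τ) 0) (Measure.dirac (aN k)) :=
      fun τ k => (integrable_const _).congr (ae_eq_dirac (fun a => max (X a - τ) 0)).symm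
    have hIcalc : ∀ τ : ℝ, ∫ a, max (X a - τ) 0 ∂Pstar
        = (ℓ:ℝ)⁻¹ * ∑ k ∈ Finset.range ℓ, max (MN k - τ) 0 := by
      intro τ
      rw [hPsdef, integral_smul_measure, integral_finset_sum_measure (fun k _ => hdint τ k)]
      have he : ∀ k ∈ Finset.range ℓ,
          (∫ a, max (X a - τ) 0 ∂Measure.dirac (aN k)) = max (MN k - τ) 0 := by
        intro k _
        rw [integral_dirac]
      rw [Finset.sum_congr rfl he, smul_eq_mul]
      congr 1
      rw [ENNReal.toReal_inv]
      simp
    set ψ : ℝ → ℝ :=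
      fun τ => τ + (1/(1-ε)) * ((ℓ:ℝ)⁻¹ * ∑ k ∈ Finset.range ℓ, max (MN k - τ) 0) with hψdef
    have hψcont : Continuous ψ := by
      apply continuous_id.add
      apply continuous_const.mul
      apply continuous_const.mul
      exact continuous_finset_sum _
        (fun k _ => (continuous_const.sub continuous_id).max continuous_const)
    set A := MN (ℓ-1) with hA
    set B := MN 0 with hB
    have hABle : A ≤ B := hMNanti 0 (ℓ-1) (Nat.zero_le _)
    have hbounds : ∀ k ∈ Finset.range ℓ, A ≤ MN k ∧ MN k ≤ B := by
      intro k hk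
      simp only [Finset.mem_range] at hk
      exact ⟨hMNanti k (ℓ-1) (by omega), hMNanti 0 k (Nat.zero_le _)⟩
    obtain ⟨t, htmem, htmin⟩ :=
      isCompact_Icc.exists_isMinOn (⟨A, le_rfl, hABle⟩ : (Icc A B).Nonempty) hψcont.continuousOn
    have hψB : ψ B = B := by
      simp only [hψdef]
      have hz : ∀ k ∈ Finset.range ℓ, max (MN k - B) 0 = 0 := by
        intro k hk
        have := (hbounds k hk).2
        apply max_eq_right
        linarith
      rw [Finset.sum_congr rfl hz]
      simp
    have htglobal : ∀ τ : ℝ, ψ t ≤ ψ τ := by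
      intro τ
      rcases le_or_gt A τ with h1 | h1
      · rcases le_or_gt τ B with h2 | h2
        · exact htmin ⟨h1, h2⟩
        · have hτ : ψ τ = τ := by
            simp only [hψdef]
            have hz : ∀ k ∈ Finset.range ℓ, max (MN k - τ) 0 = 0 := by
              intro k hk
              have := (hbounds k hk).2
              apply max_eq_right
              linarith
            rw [Finset.sum_congr rfl hz]
            simp
          rw [hτ]
          calc ψ t ≤ ψ B := htmin ⟨hABle, le_rfl⟩
            _ = B := hψB
            _ ≤ τ := h2.le
      · have hsums : ∀ c : ℝ, (∀ k ∈ Finset.range ℓ, c ≤ MN k) →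
            ∑ k ∈ Finset.range ℓ, max (MN k - c) 0 = (∑ k ∈ Finset.range ℓ, MN k) - ℓ * c := by
          intro c hc
          have he : ∀ k ∈ Finset.range ℓ, max (MN k - c) 0 = MN k - c := by
            intro k hk
            apply max_eq_left
            linarith [hc k hk]
          rw [Finset.sum_congr rfl he, Finset.sum_sub_distrib]
          simp [Finset.sum_const, Finset.card_range]
        have hsA := hsums A (fun k hk => (hbounds k hk).1)
        have hsτ := hsums τ (fun k hk => by linarith [(hbounds k hk).1])
        have hψA : ψ A ≤ ψ τ := by
          simp only [hψdef]
          rw [hsA, hsτ]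
          have expand : ∀ c : ℝ,
              c + (1/(1-ε)) * ((ℓ:ℝ)⁻¹ * ((∑ k ∈ Finset.range ℓ, MN k) - ℓ * c))
              = c * (1 - 1/(1-ε)) + (1/(1-ε)) * ((ℓ:ℝ)⁻¹ * ∑ k ∈ Finset.range ℓ, MN k) := by
            intro c
            field_simp
            ring
          rw [expand A, expand τ]
          have hns : 1 - 1/(1-ε) ≤ 0 := by linarith
          nlinarith
        exact le_trans (htmin ⟨le_rfl, hABle⟩) hψA
    have hmem : Pstar ∈ ambiguitySet n ℓ C := ⟨hPsprob, hPscut⟩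
    have hcvle := H Pstar hmem
    have hcv : cvar Pstar ε X = ⨅ τ : ℝ, ψ τ := by
      unfold cvar
      exact iInf_congr (fun τ => by rw [hIcalc τ])
    have hψtb : ψ t ≤ b := by
      refine le_trans (le_ciInf htglobal) ?_
      rw [← hcv]
      exact hcvle
    set sN : ℕ → ℝ := fun k => max (MN k - t) 0 with hsNdef
    set vN : ℕ → ℝ := fun k => if k = 0 then 0 else sN (k-1) - sN k with hvNdef
    have hsNanti : ∀ k k', k ≤ k' → sN k' ≤ sN k := by
      intro k k' hkk
      exact max_le_max (by linarith [hMNanti k k' hkk]) le_rfl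
    have hsNnn : ∀ k, 0 ≤ sN k := fun k => le_max_right _ _
    have hIic : ∀ i : Fin (ℓ+1), ∑ j ∈ Finset.Iic i, vN (j:ℕ) = sN 0 - sN (i:ℕ) := by
      intro i
      rw [sum_Iic_fin ℓ i vN]
      simp only [hvNdef]
      exact telescope_aux sN (i:ℕ)
    refine ⟨sN 0, t, fun i => vN (i:ℕ), ?_, ?_, ?_, ?_⟩
    · intro i
      simp only [hvNdef]
      split
      · exact le_rfl
      · have := hsNanti ((i:ℕ)-1) (i:ℕ) (by omega)
        linarith
    · have hsum1 : ∑ i : Fin (ℓ+1), (((i:ℕ):ℝ)/ℓ - 1) * vN (i:ℕ)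
          = ∑ k ∈ Finset.range (ℓ+1), ((k:ℝ)/ℓ - 1) * vN k :=
        Fin.sum_univ_eq_sum_range (fun k => ((k:ℝ)/ℓ - 1) * vN k) (ℓ+1)
      have habel := abel_aux ℓ hℓ sN
      have hsum2 : ∑ k ∈ Finset.range (ℓ+1), ((k:ℝ)/ℓ - 1) * vN k
          = ∑ k ∈ Finset.range (ℓ+1), ((k:ℝ)/ℓ - 1) * (if k = 0 then 0 else sN (k-1) - sN k) := by
        simp only [hvNdef]
      have hSb : (ℓ:ℝ)⁻¹ * ∑ k ∈ Finset.range ℓ, sN k ≤ (b - t) * (1 - ε) := by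
        have hψt : t + (1/(1-ε)) * ((ℓ:ℝ)⁻¹ * ∑ k ∈ Finset.range ℓ, sN k) ≤ b := by
          have h := hψtb
          simp only [hψdef] at h
          simp only [hsNdef]
          exact h
        set S := (ℓ:ℝ)⁻¹ * ∑ k ∈ Finset.range ℓ, sN k with hS
        have hcS : (1/(1-ε)) * S ≤ b - t := by linarith
        have hSrw : S = (1-ε) * ((1/(1-ε)) * S) := by field_simp
        rw [hSrw]
        calc (1-ε) * ((1/(1-ε)) * S) ≤ (1-ε) * (b - t) :=
              mul_le_mul_of_nonneg_left hcS hε1.le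
          _ = (b - t) * (1 - ε) := mul_comm _ _
      calc sN 0 + ∑ i : Fin (ℓ+1), (((i:ℕ):ℝ)/ℓ - 1) * vN (i:ℕ)
          = (ℓ:ℝ)⁻¹ * ∑ k ∈ Finset.range ℓ, sN k := by
            rw [hsum1, hsum2]
            exact habel
        _ ≤ (b - t) * (1 - ε) := hSb
    · intro i
      have h := hIic i
      simp only [] at h ⊢
      rw [h]
      have := hsNnn (i:ℕ)
      linarith
    · intro i a ha
      have haai : aN (i:ℕ) = aa i := by
        have h1 : (⟨min (i:ℕ) ℓ, by omega⟩ : Fin (ℓ+1)) = i := by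
          apply Fin.ext
          show min (i:ℕ) ℓ = (i:ℕ)
          have := i.isLt
          omega
        calc aN (i:ℕ) = aa ⟨min (i:ℕ) ℓ, by omega⟩ := rfl
          _ = aa i := by rw [h1]
      have hLa : L a ≤ L (aN (i:ℕ)) := by
        rw [haai]
        exact haaMax i a ha
      have hXa : X a ≤ MN (i:ℕ) := by
        rw [hXL, hMNdef]
        exact hg hLa
      have h := hIic i
      simp only [] at h ⊢
      rw [h]
      have hm : MN (i:ℕ) - t ≤ sN (i:ℕ) := le_max_left _ _
      have hgoal : X a ≤ sN 0 - (sN 0 - sN (i:ℕ)) + t := by linarith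
      exact hgoal
  · rintro ⟨w, t, v, hv, h1, h2, h3⟩ P hP
    obtain ⟨hPprob, hPcut⟩ := hP
    have hP0 : P (C 0) = 1 := by
      have h := hPcut 0
      rw [hzero] at h
      simp only [sub_zero, ENNReal.ofReal_one] at h
      exact le_antisymm prob_le_one h
    have hae : ∀ᵐ a ∂P, a ∈ C 0 := by
      have hcompl : P ((C 0)ᶜ) = 0 := by
        rw [measure_compl hC0closed.measurableSet (measure_ne_top P _), hP0, measure_univ, tsub_self]
      rw [ae_iff]
      convert hcompl using 2
      rfl
    have hXint : Integrable X P := by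
      refine Integrable.mono' (integrable_const K) hXmeas.aestronglyMeasurable ?_
      filter_upwards [hae] with a ha using hXbound a ha
    have hposint : ∀ τ : ℝ, Integrable (fun a => max (X a - τ) 0) P := by
      intro τ
      have := (hXint.sub (integrable_const τ)).pos_part
      simpa [max_comm] using this
    have hbdd : BddBelow (Set.range fun τ : ℝ => τ + (1/(1-ε)) * ∫ a, max (X a - τ) 0 ∂P) := by
      refine ⟨∫ a, X a ∂P, ?_⟩
      rintro y ⟨τ, rfl⟩
      have hnn : 0 ≤ ∫ a, max (X a - τ) 0 ∂P :=
        integral_nonneg (fun a => le_max_right _ _)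
      by_cases hτ : (∫ a, X a ∂P) ≤ τ
      · nlinarith
      · push_neg at hτ
        have hEq : ∫ a, (X a - τ) ∂P = (∫ a, X a ∂P) - τ := by
          rw [integral_sub hXint (integrable_const τ), integral_const]
          simp [measure_univ]
        have hineq : (∫ a, X a ∂P) - τ ≤ ∫ a, max (X a - τ) 0 ∂P := by
          rw [← hEq]
          exact integral_mono (hXint.sub (integrable_const τ)) (hposint τ)
            (fun a => le_max_left _ _)
        nlinarith
    refine le_trans (ciInf_le hbdd t) ?_
    -- bound the value at t
    set h : (Fin n → ℝ) → ℝ :=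
      fun a => w - ∑ i : Fin (ℓ+1), (C (((i:ℕ):ℝ)/ℓ)).indicator (fun _ => v i) a with hhdef
    have hint_h : Integrable h P := by
      refine (integrable_const w).sub (integrable_finset_sum _ (fun i _ => ?_))
      exact (integrable_const (v i)).indicator (hCmeas i)
    have hpt : ∀ᵐ a ∂P, max (X a - t) 0 ≤ h a := by
      filter_upwards [hae] with a ha
      set T := Finset.univ.filter (fun i : Fin (ℓ+1) => a ∈ C (((i:ℕ):ℝ)/ℓ)) with hT
      have hT0 : (0 : Fin (ℓ+1)) ∈ T := by
        simp only [hT, Finset.mem_filter, Finset.mem_univ, true_and]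
        rw [hzero]
        exact ha
      have hTne : T.Nonempty := ⟨0, hT0⟩
      set i₀ := T.max' hTne with hi₀
      have hi₀T : i₀ ∈ T := T.max'_mem hTne
      have hi₀a : a ∈ C (((i₀:ℕ):ℝ)/ℓ) := by
        have := hi₀T
        simp only [hT, Finset.mem_filter, Finset.mem_univ, true_and] at this
        exact this
      have hsum : ∑ i : Fin (ℓ+1), (C (((i:ℕ):ℝ)/ℓ)).indicator (fun _ => v i) a
          = ∑ i ∈ T, v i := by
        rw [hT, Finset.sum_filter]
        refine Finset.sum_congr rfl (fun i _ => ?_)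
        rw [Set.indicator_apply]
      have hsub : T ⊆ Finset.Iic i₀ :=
        fun i hi => Finset.mem_Iic.2 (Finset.le_max' T i hi)
      have hle : ∑ i ∈ T, v i ≤ ∑ i ∈ Finset.Iic i₀, v i :=
        Finset.sum_le_sum_of_subset_of_nonneg hsub (fun i _ _ => hv i)
      have hh2 := h2 i₀
      have hh3 := h3 i₀ a hi₀a
      simp only [hhdef, hsum]
      apply max_le
      · linarith
      · linarith
    have hIle : ∫ a, max (X a - t) 0 ∂P ≤ ∫ a, h a ∂P :=
      integral_mono_ae (hposint t) hint_h hpt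
    have hhval : ∫ a, h a ∂P
        = w - ∑ i : Fin (ℓ+1), (P (C (((i:ℕ):ℝ)/ℓ))).toReal * v i := by
      rw [hhdef]
      rw [integral_sub (integrable_const w)
        (integrable_finset_sum _ (fun i _ => (integrable_const (v i)).indicator (hCmeas i)))]
      rw [integral_const]
      simp only [probReal_univ, one_smul]
      congr 1
      rw [integral_finset_sum _ (fun i _ => (integrable_const (v i)).indicator (hCmeas i))]
      refine Finset.sum_congr rfl (fun i _ => ?_)
      rw [integral_indicator_const (v i) (hCmeas i), smul_eq_mul, Measure.real]
    have htoReal : ∀ i : Fin (ℓ+1), 1 - ((i:ℕ):ℝ)/ℓ ≤ (P (C (((i:ℕ):ℝ)/ℓ))).toReal := by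
      intro i
      exact (ENNReal.ofReal_le_iff_le_toReal (measure_ne_top P _)).1 (hPcut i)
    have hfinal : ∫ a, h a ∂P ≤ w + ∑ i : Fin (ℓ+1), (((i:ℕ):ℝ)/ℓ - 1) * v i := by
      rw [hhval]
      have e : ∀ i ∈ (Finset.univ : Finset (Fin (ℓ+1))),
          (((i:ℕ):ℝ)/ℓ - 1) * v i = -((1 - ((i:ℕ):ℝ)/ℓ) * v i) := fun i _ => by ring
      rw [Finset.sum_congr rfl e, Finset.sum_neg_distrib]
      have hsle : ∑ i : Fin (ℓ+1), (1 - ((i:ℕ):ℝ)/ℓ) * v i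
          ≤ ∑ i : Fin (ℓ+1), (P (C (((i:ℕ):ℝ)/ℓ))).toReal * v i :=
        Finset.sum_le_sum (fun i _ => mul_le_mul_of_nonneg_right (htoReal i) (hv i))
      linarith
    have hIb : ∫ a, max (X a - t) 0 ∂P ≤ (b - t) * (1 - ε) :=
      le_trans hIle (le_trans hfinal h1)
    calc t + (1/(1-ε)) * ∫ a, max (X a - t) 0 ∂P
        ≤ t + (1/(1-ε)) * ((b - t) * (1 - ε)) := by
          have := mul_le_mul_of_nonneg_left hIb hcpos.le
          linarith
      _ = b := by field_simp; ring
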